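/- Let α > -1 and ω(t) = (α+1)(1-t²)^α on [0,1). Then sup_{a∈[0,1)} (1/(1-a))∫_a^1 ω(t)(1 + ∫_0^t ds/ŵ(s)) dt < ∞ if and only if α > 0, where ŵ(s) = ∫_s^1 ω(u)du. -/

import Mathlib

open MeasureTheory Set intervalIntegral Real

noncomputable def wf (α : ℝ) : ℝ → ℝ := fun u => (α + 1) * (1 - u^2) ^ α
noncomputable def hw (α : ℝ) : ℝ → ℝ := fun s => ∫ u in s..1, wf α u
noncomputable def Ff (α : ℝ) : ℝ → ℝ := fun t => ∫ s in (0:ℝ)..t, 1 / hw α s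

lemma w_meas (α : ℝ) : Measurable (wf α) := by
  unfold wf
  exact measurable_const.mul ((measurable_const.sub (measurable_id.pow measurable_const)).pow measurable_const)

lemma w_nonneg (α : ℝ) {u : ℝ} (h : u ∈ Icc (-1:ℝ) 1) (hα : -1 < α) : 0 ≤ wf α u := by
  unfold wf
  have : (0:ℝ) ≤ 1 - u^2 := by nlinarith [h.1, h.2]
  exact mul_nonneg (by linarith) (Real.rpow_nonneg this α)

lemma int_one_sub_rpow {α : ℝ} (hα : -1 < α) {s : ℝ} (_hs : s ≤ 1) :
    ∫ u in s..1, (1-u)^α = (1-s)^(α+1)/(α+1) := by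
  rw [intervalIntegral.integral_comp_sub_left (fun x => x ^ α) 1]
  rw [integral_rpow (Or.inl hα)]
  rw [show (1:ℝ) - 1 = 0 by ring, Real.zero_rpow (by linarith)]
  ring

lemma ii_one_sub_rpow {α : ℝ} (hα : -1 < α) (a b : ℝ) :
    IntervalIntegrable (fun u => (1-u)^α) volume a b := by
  have h := (intervalIntegrable_rpow' (a := 1-b) (b := 1-a) hα).comp_sub_left 1
  exact (by simpa using h : IntervalIntegrable (fun u => (1-u)^α) volume b a).symm

lemma w_le {α : ℝ} (hα : -1 < α) {u : ℝ} (h : u ∈ Icc (0:ℝ) 1) :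
    wf α u ≤ (α+1) * max 1 (2^α) * (1-u)^α := by
  obtain ⟨h0, h1⟩ := h
  have hsplit : (1 - u^2 : ℝ) ^ α = (1-u)^α * (1+u)^α := by
    rw [show (1 - u^2 : ℝ) = (1-u) * (1+u) by ring]
    exact Real.mul_rpow (by linarith) (by linarith)
  unfold wf
  rw [hsplit]
  have h2 : (1+u)^α ≤ max 1 (2^α) := by
    rcases le_or_gt 0 α with hα0 | hα0
    · exact le_max_of_le_right (Real.rpow_le_rpow (by linarith) (by linarith) hα0)
    · exact le_max_of_le_left (Real.rpow_le_one_of_one_le_of_nonpos (by linarith) hα0.le)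
  have h3 : (0:ℝ) ≤ (1-u)^α := Real.rpow_nonneg (by linarith) α
  calc (α+1) * ((1-u)^α * (1+u)^α) ≤ (α+1) * ((1-u)^α * max 1 (2^α)) := by
        apply mul_le_mul_of_nonneg_left _ (by linarith)
        exact mul_le_mul_of_nonneg_left h2 h3
    _ = (α+1) * max 1 (2^α) * (1-u)^α := by ring

lemma w_ge {α : ℝ} (hα : -1 < α) {u : ℝ} (h : u ∈ Icc (0:ℝ) 1) :
    (α+1) * min 1 (2^α) * (1-u)^α ≤ wf α u := by
  obtain ⟨h0, h1⟩ := h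
  have hsplit : (1 - u^2 : ℝ) ^ α = (1-u)^α * (1+u)^α := by
    rw [show (1 - u^2 : ℝ) = (1-u) * (1+u) by ring]
    exact Real.mul_rpow (by linarith) (by linarith)
  unfold wf
  rw [hsplit]
  have h2 : min 1 (2^α) ≤ (1+u)^α := by
    rcases le_or_gt 0 α with hα0 | hα0
    · exact min_le_of_left_le (Real.one_le_rpow (by linarith) hα0)
    · refine min_le_of_right_le (Real.rpow_le_rpow_of_nonpos (by linarith) (by linarith) hα0.le)
  have h3 : (0:ℝ) ≤ (1-u)^α := Real.rpow_nonneg (by linarith) α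
  calc (α+1) * min 1 (2^α) * (1-u)^α = (α+1) * ((1-u)^α * min 1 (2^α)) := by ring
    _ ≤ (α+1) * ((1-u)^α * (1+u)^α) := by
        apply mul_le_mul_of_nonneg_left _ (by linarith)
        exact mul_le_mul_of_nonneg_left h2 h3

lemma w_intb {α : ℝ} (hα : -1 < α) {a b : ℝ} (hsub : uIcc a b ⊆ Icc (0:ℝ) 1) :
    IntervalIntegrable (wf α) volume a b := by
  apply IntervalIntegrable.mono_fun' (g := fun u => (α+1) * max 1 (2^α) * (1-u)^α)
    ((ii_one_sub_rpow hα a b).const_mul _) ((w_meas α).aestronglyMeasurable)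
  filter_upwards [ae_restrict_mem measurableSet_uIoc] with x hx
  have hx' : x ∈ Icc (0:ℝ) 1 := hsub (uIoc_subset_uIcc hx)
  rw [Real.norm_eq_abs, abs_of_nonneg (w_nonneg α (Icc_subset_Icc (by norm_num) le_rfl hx') hα)]
  exact w_le hα hx'

lemma hw_cont {α : ℝ} (hα : -1 < α) : ContinuousOn (hw α) (Icc 0 1) := by
  have h_int : IntegrableOn (wf α) (uIcc (0:ℝ) 1) volume := by
    rw [uIcc_of_le (by norm_num : (0:ℝ) ≤ 1), integrableOn_Icc_iff_integrableOn_Ioc]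
    exact (intervalIntegrable_iff_integrableOn_Ioc_of_le (by norm_num)).mp
      (w_intb hα (by rw [uIcc_of_le] <;> norm_num))
  have := intervalIntegral.continuousOn_primitive_interval_left h_int
  rwa [uIcc_of_le (by norm_num : (0:ℝ) ≤ 1)] at this

lemma hw_ge {α : ℝ} (hα : -1 < α) {s : ℝ} (hs : s ∈ Icc (0:ℝ) 1) :
    min 1 (2^α) * (1-s)^(α+1) ≤ hw α s := by
  have h1 : ∫ u in s..1, (α+1) * min 1 (2^α) * (1-u)^α ≤ hw α s := by
    apply intervalIntegral.integral_mono_on hs.2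
      (((ii_one_sub_rpow hα s 1).const_mul _))
      (w_intb hα (by rw [uIcc_of_le hs.2]; exact Icc_subset_Icc hs.1 le_rfl))
    intro x hx
    exact w_ge hα ⟨le_trans hs.1 hx.1, hx.2⟩
  rw [intervalIntegral.integral_const_mul, int_one_sub_rpow hα hs.2] at h1
  have hne : α + 1 ≠ 0 := by linarith
  calc min 1 (2^α) * (1-s)^(α+1) = (α+1) * min 1 (2^α) * ((1-s)^(α+1)/(α+1)) := by
        field_simp
    _ ≤ hw α s := h1

lemma min_pos {α : ℝ} : (0:ℝ) < min 1 ((2:ℝ)^α) :=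
  lt_min one_pos (Real.rpow_pos_of_pos two_pos α)

lemma hw_pos {α : ℝ} (hα : -1 < α) {s : ℝ} (hs : s ∈ Ico (0:ℝ) 1) : 0 < hw α s :=
  lt_of_lt_of_le (mul_pos min_pos (Real.rpow_pos_of_pos (by linarith [hs.2]) _))
    (hw_ge hα ⟨hs.1, hs.2.le⟩)

lemma hw_nonneg {α : ℝ} (hα : -1 < α) {s : ℝ} (hs : s ∈ Icc (0:ℝ) 1) : 0 ≤ hw α s :=
  intervalIntegral.integral_nonneg hs.2
    (fun u hu => w_nonneg α ⟨by linarith [hs.1, hu.1], hu.2⟩ hα)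

lemma F_nonneg {α : ℝ} (hα : -1 < α) {t : ℝ} (ht : t ∈ Icc (0:ℝ) 1) : 0 ≤ Ff α t :=
  intervalIntegral.integral_nonneg ht.1
    (fun s hs => by
      have := hw_nonneg hα ⟨hs.1, le_trans hs.2 ht.2⟩
      positivity)

lemma inv_hw_le {α : ℝ} (hα : -1 < α) {s : ℝ} (hs : s ∈ Ico (0:ℝ) 1) :
    1 / hw α s ≤ (min 1 (2^α))⁻¹ * (1-s)^(-(α+1)) := by
  have h1 : (0:ℝ) < (1-s)^(α+1) := Real.rpow_pos_of_pos (by linarith [hs.2]) _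
  have h2 : 0 < min 1 ((2:ℝ)^α) * (1-s)^(α+1) := mul_pos min_pos h1
  have h3 := hw_ge hα ⟨hs.1, hs.2.le⟩
  rw [Real.rpow_neg (by linarith [hs.2])]
  rw [one_div]
  calc (hw α s)⁻¹ ≤ (min 1 ((2:ℝ)^α) * (1-s)^(α+1))⁻¹ :=
        inv_anti₀ h2 h3
    _ = (min 1 ((2:ℝ)^α))⁻¹ * ((1-s)^(α+1))⁻¹ := by rw [mul_inv]

lemma inv_hw_contOn {α : ℝ} (hα : -1 < α) {b : ℝ} (hb : b ∈ Ico (0:ℝ) 1) :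
    ContinuousOn (fun s => 1 / hw α s) (Icc 0 b) := by
  apply ContinuousOn.div continuousOn_const
    ((hw_cont hα).mono (Icc_subset_Icc le_rfl hb.2.le))
  intro s hs
  exact (hw_pos hα ⟨hs.1, lt_of_le_of_lt hs.2 hb.2⟩).ne'

lemma F_le {α : ℝ} (hα : -1 < α) (hα0 : α ≠ 0) {t : ℝ} (ht : t ∈ Ico (0:ℝ) 1) :
    Ff α t ≤ (min 1 (2^α))⁻¹ * (((1-t)^(-α) - 1)/α) := by
  have hcont : ContinuousOn (fun s : ℝ => (1-s)^(-(α+1))) (Icc 0 t) := by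
    apply ContinuousOn.rpow_const (by fun_prop)
    intro x hx
    left
    have : x < 1 := lt_of_le_of_lt hx.2 ht.2
    exact ne_of_gt (by linarith)
  have h1 : Ff α t ≤ ∫ s in (0:ℝ)..t, (min 1 ((2:ℝ)^α))⁻¹ * (1-s)^(-(α+1)) := by
    apply intervalIntegral.integral_mono_on ht.1
    · apply ContinuousOn.intervalIntegrable
      rw [uIcc_of_le ht.1]
      exact inv_hw_contOn hα ht
    · exact (ContinuousOn.mul continuousOn_const hcont).intervalIntegrable_of_Icc ht.1
    · intro s hs
      exact inv_hw_le hα ⟨hs.1, lt_of_le_of_lt hs.2 ht.2⟩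
  rw [intervalIntegral.integral_const_mul] at h1
  have h2 : ∫ s in (0:ℝ)..t, (1-s)^(-(α+1)) = ((1-t)^(-α) - 1)/α := by
    rw [intervalIntegral.integral_comp_sub_left (fun x => x ^ (-(α+1))) 1]
    rw [integral_rpow (Or.inr ⟨by intro h; apply hα0; linarith [neg_eq_iff_eq_neg.mp h],
      by rw [uIcc_of_le (by linarith [ht.1] : (1:ℝ)-t ≤ 1-0)]
         intro hmem
         simp only [mem_Icc] at hmem
         linarith [hmem.1, ht.2]⟩)]
    have : -(α+1) + 1 = -α := by ring
    rw [this]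
    rw [show (1:ℝ) - 0 = 1 by ring, Real.one_rpow]
    rw [div_eq_div_iff (by intro h; apply hα0; linarith [neg_eq_zero.mp h]) (by exact hα0)]
    ring
  rw [h2] at h1
  exact h1

lemma F_contAt {α : ℝ} (hα : -1 < α) {t : ℝ} (ht : t ∈ Ioo (0:ℝ) 1) :
    ContinuousAt (Ff α) t := by
  set b := (t+1)/2 with hb
  have hb1 : b ∈ Ico (0:ℝ) 1 := by constructor <;> [skip; skip] <;> simp [hb] <;> nlinarith [ht.1, ht.2]
  have h_int : IntegrableOn (fun s => 1 / hw α s) (uIcc (0:ℝ) b) volume := by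
    rw [uIcc_of_le hb1.1]
    exact (inv_hw_contOn hα hb1).integrableOn_Icc
  have hcont := intervalIntegral.continuousOn_primitive_interval h_int
  rw [uIcc_of_le hb1.1] at hcont
  exact hcont.continuousAt (Icc_mem_nhds ht.1 (by simp [hb]; linarith [ht.2]))

lemma g_bound {α : ℝ} (hα0 : 0 < α) {t : ℝ} (ht : t ∈ Ioc (0:ℝ) 1) :
    wf α t * (1 + Ff α t) ≤ (α+1) * 2^α * (1 + 1/α) := by
  have hα : -1 < α := by linarith
  have h2pos : (0:ℝ) < 2^α := Real.rpow_pos_of_pos two_pos α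
  have hone : (1:ℝ) ≤ 2^α := Real.one_le_rpow one_le_two hα0.le
  have hmax : max 1 ((2:ℝ)^α) = 2^α := max_eq_right hone
  have hmin : min 1 ((2:ℝ)^α) = 1 := min_eq_left hone
  rcases eq_or_lt_of_le ht.2 with h1 | h1
  · have hw0 : wf α t = 0 := by
      unfold wf
      rw [h1, one_pow, sub_self, Real.zero_rpow hα0.ne', mul_zero]
    rw [hw0, zero_mul]
    have : (0:ℝ) < 1 + 1/α := by positivity
    positivity
  · have htIco : t ∈ Ico (0:ℝ) 1 := ⟨ht.1.le, h1⟩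
    have hF := F_le hα hα0.ne' htIco
    rw [hmin, inv_one, one_mul] at hF
    have hFn := F_nonneg hα ⟨ht.1.le, ht.2⟩
    have hwle := w_le hα ⟨ht.1.le, ht.2⟩
    rw [hmax] at hwle
    have hwn := w_nonneg α ⟨by linarith [ht.1.le], ht.2⟩ hα
    set x := (1-t)^α with hx
    have hxpos : 0 < x := Real.rpow_pos_of_pos (by linarith [h1]) α
    have hx1 : x ≤ 1 := Real.rpow_le_one (by linarith [h1]) (by linarith [ht.1]) hα0.le
    have hinv : (1-t)^(-α) = x⁻¹ := Real.rpow_neg (by linarith [h1]) α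
    rw [hinv] at hF
    have hxinv : x * x⁻¹ = 1 := mul_inv_cancel₀ hxpos.ne'
    have step1 : wf α t * (1 + Ff α t) ≤ ((α+1) * 2^α * x) * (1 + (x⁻¹ - 1)/α) := by
      apply mul_le_mul hwle (by linarith) (by linarith) (by positivity)
    apply le_trans step1
    have key : x * (1 + (x⁻¹ - 1)/α) ≤ 1 + 1/α := by
      have e : x * (1 + (x⁻¹ - 1)/α) = x + (x * x⁻¹ - x)/α := by ring
      rw [e, hxinv]
      have h3 : (1-x)/α ≤ 1/α := by gcongr <;> linarith
      have h4 : (1 - x)/α = (1-x)/α := rfl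
      linarith [h3]
    calc (α+1) * 2^α * x * (1 + (x⁻¹ - 1)/α) = (α+1) * 2^α * (x * (1 + (x⁻¹ - 1)/α)) := by ring
      _ ≤ (α+1) * 2^α * (1 + 1/α) := by
          apply mul_le_mul_of_nonneg_left key (by positivity)

lemma forward {α : ℝ} (hα0 : 0 < α) {a : ℝ} (ha : a ∈ Ico (0:ℝ) 1) :
    (1 / (1 - a)) * ∫ t in a..1, wf α t * (1 + Ff α t) ≤ (α+1) * 2^α * (1 + 1/α) := by
  have hα : -1 < α := by linarith
  set M := (α+1) * 2^α * (1 + 1/α) with hM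
  have key : ∀ x ∈ uIoc a 1, ‖wf α x * (1 + Ff α x)‖ ≤ M := by
    intro x hx
    rw [uIoc_of_le ha.2.le] at hx
    have hx1 : x ∈ Ioc (0:ℝ) 1 := ⟨lt_of_le_of_lt ha.1 hx.1, hx.2⟩
    have hwn : 0 ≤ wf α x := w_nonneg α ⟨by linarith [hx1.1.le], hx1.2⟩ hα
    have hFn : 0 ≤ Ff α x := F_nonneg hα ⟨hx1.1.le, hx1.2⟩
    rw [Real.norm_eq_abs, abs_of_nonneg (by positivity)]
    exact g_bound hα0 hx1
  have hnorm := intervalIntegral.norm_integral_le_of_norm_le_const key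
  rw [Real.norm_eq_abs] at hnorm
  have h1a : (0:ℝ) < 1 - a := by linarith [ha.2]
  rw [abs_of_pos h1a] at hnorm
  have hI : (∫ t in a..1, wf α t * (1 + Ff α t)) ≤ M * (1-a) :=
    le_trans (le_abs_self _) hnorm
  calc (1 / (1 - a)) * ∫ t in a..1, wf α t * (1 + Ff α t)
      ≤ (1 / (1 - a)) * (M * (1-a)) := by
        apply mul_le_mul_of_nonneg_left hI (by positivity)
    _ = M := by field_simp

lemma loglem : IntervalIntegrable Real.log volume 0 1 := by
  apply IntervalIntegrable.mono_fun' (g := fun x : ℝ => 2 * x ^ (-(1/2) : ℝ))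
    ((intervalIntegrable_rpow' (by norm_num)).const_mul 2)
    Real.measurable_log.aestronglyMeasurable
  rw [uIoc_of_le (by norm_num : (0:ℝ) ≤ 1)]
  filter_upwards [ae_restrict_mem measurableSet_Ioc] with x hx
  have hx0 : 0 < x := hx.1
  have hx1 : x ≤ 1 := hx.2
  rw [Real.norm_eq_abs, abs_of_nonpos (Real.log_nonpos hx0.le hx1)]
  have hp : 0 < x ^ (-(1/2):ℝ) := Real.rpow_pos_of_pos hx0 _
  have key : Real.log (x ^ (-(1/2):ℝ)) ≤ x ^ (-(1/2):ℝ) - 1 :=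
    Real.log_le_sub_one_of_pos hp
  rw [Real.log_rpow hx0] at key
  linarith

lemma log1sub_int {a : ℝ} (ha : a ∈ Ico (0:ℝ) 1) :
    IntervalIntegrable (fun t => Real.log (1-t)) volume a 1 := by
  have h0 : IntervalIntegrable Real.log volume 0 (1-a) := by
    apply loglem.mono_set'
    rw [uIoc_of_le (by linarith [ha.2] : (0:ℝ) ≤ 1-a), uIoc_of_le (by norm_num : (0:ℝ) ≤ 1)]
    exact Ioc_subset_Ioc le_rfl (by linarith [ha.1])
  have := h0.comp_sub_left 1
  norm_num at this
  exact this.symm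

lemma Ffzero {t : ℝ} (ht : t ∈ Ico (0:ℝ) 1) : Ff 0 t = -Real.log (1-t) := by
  have hhw : ∀ s : ℝ, hw 0 s = 1 - s := by
    intro s
    unfold hw wf
    simp [Real.rpow_zero]
  unfold Ff
  simp_rw [hhw]
  rw [intervalIntegral.integral_comp_sub_left (fun x => 1/x) 1]
  rw [show (1:ℝ) - 0 = 1 by ring]
  rw [integral_one_div]
  · rw [one_div, Real.log_inv]
  · rw [uIcc_of_le (by linarith [ht.1] : (1:ℝ) - t ≤ 1)]
    intro hmem
    simp only [mem_Icc] at hmem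
    linarith [hmem.1, ht.2]

lemma case_zero (M : ℝ)
    (hM : ∀ a ∈ Ico (0:ℝ) 1, (1/(1-a)) * ∫ t in a..1, wf 0 t * (1 + Ff 0 t) ≤ M) :
    False := by
  set K := max M 0 + 1 with hK
  have hKpos : 0 < K := by positivity
  set a := 1 - Real.exp (-K) with ha
  have hexp : 0 < Real.exp (-K) := Real.exp_pos _
  have hexp1 : Real.exp (-K) < 1 := by
    rw [Real.exp_lt_one_iff]
    linarith
  have haI : a ∈ Ico (0:ℝ) 1 := ⟨by rw [ha]; linarith, by rw [ha]; linarith⟩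
  have hwf : ∀ t : ℝ, wf 0 t = 1 := fun t => by simp [wf]
  have hae1 : ∀ᵐ (t:ℝ) ∂(volume : Measure ℝ), t ≠ 1 := by
    refine ae_iff.mpr ?_
    simpa using measure_singleton (1:ℝ)
  have hniceint : IntervalIntegrable (fun t : ℝ => 1 - Real.log (1-t)) volume a 1 :=
    intervalIntegrable_const.sub (log1sub_int haI)
  have heq : (fun t : ℝ => 1 - Real.log (1-t)) =ᵐ[volume.restrict (uIoc a 1)]
      (fun t => wf 0 t * (1 + Ff 0 t)) := by
    rw [uIoc_of_le haI.2.le]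
    filter_upwards [ae_restrict_of_ae hae1, ae_restrict_mem measurableSet_Ioc] with t h1 h2
    have htI : t ∈ Ico (0:ℝ) 1 := ⟨le_trans haI.1 h2.1.le, lt_of_le_of_ne h2.2 h1⟩
    rw [hwf, one_mul, Ffzero htI]
    ring
  have hgint : IntervalIntegrable (fun t => wf 0 t * (1 + Ff 0 t)) volume a 1 := by
    rw [intervalIntegrable_iff] at hniceint ⊢
    exact hniceint.congr heq
  have hmono : (1-a) * (1 - Real.log (1-a)) ≤ ∫ t in a..1, wf 0 t * (1 + Ff 0 t) := by
    have hc : ∫ _t in a..1, (1 - Real.log (1-a)) = (1-a) * (1 - Real.log (1-a)) := by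
      rw [intervalIntegral.integral_const, smul_eq_mul]
    rw [← hc]
    apply intervalIntegral.integral_mono_ae_restrict haI.2.le intervalIntegrable_const hgint
    filter_upwards [ae_restrict_of_ae hae1, ae_restrict_mem measurableSet_Icc] with t h1 h2
    have ht1 : t < 1 := lt_of_le_of_ne h2.2 h1
    have htI : t ∈ Ico (0:ℝ) 1 := ⟨le_trans haI.1 h2.1, ht1⟩
    rw [hwf, one_mul, Ffzero htI]
    have hlog : Real.log (1-t) ≤ Real.log (1-a) := by
      apply Real.log_le_log (by linarith)
      linarith [h2.1]
    linarith
  have h1a : 1 - a = Real.exp (-K) := by rw [ha]; ring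
  have hpos : (0:ℝ) < 1 - a := by rw [h1a]; exact hexp
  have hfinal : 1 + K ≤ M := by
    have step : (1/(1-a)) * ((1-a) * (1 - Real.log (1-a))) ≤
        (1/(1-a)) * ∫ t in a..1, wf 0 t * (1 + Ff 0 t) :=
      mul_le_mul_of_nonneg_left hmono (by positivity)
    have heval : (1/(1-a)) * ((1-a) * (1 - Real.log (1-a))) = 1 + K := by
      rw [h1a, Real.log_exp]
      field_simp
      ring
    rw [heval] at step
    exact le_trans step (hM a haI)
  have : M ≤ max M 0 := le_max_left M 0
  rw [hK] at hfinal
  linarith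

lemma case_neg {α : ℝ} (hα : -1 < α) (hneg : α < 0) (M : ℝ)
    (hM : ∀ a ∈ Ico (0:ℝ) 1, (1/(1-a)) * ∫ t in a..1, wf α t * (1 + Ff α t) ≤ M) :
    False := by
  have hα1 : (0:ℝ) < α + 1 := by linarith
  have h2pos : (0:ℝ) < 2^α := Real.rpow_pos_of_pos two_pos α
  have h2le1 : (2:ℝ)^α ≤ 1 := Real.rpow_le_one_of_one_le_of_nonpos one_le_two hneg.le
  have hmin : min 1 ((2:ℝ)^α) = 2^α := min_eq_right h2le1
  have hmax : max 1 ((2:ℝ)^α) = 1 := max_eq_left h2le1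
  set CF := ((2:ℝ)^α)⁻¹ * (-α)⁻¹ with hCFdef
  have hCFpos : 0 < CF := mul_pos (inv_pos.mpr h2pos) (inv_pos.mpr (by linarith))
  have hCF : ∀ t ∈ Ico (0:ℝ) 1, Ff α t ≤ CF := by
    intro t ht
    have h := F_le hα hneg.ne ht
    rw [hmin] at h
    refine h.trans ?_
    have hy0 : 0 ≤ (1-t)^(-α) := Real.rpow_nonneg (by linarith [ht.2]) _
    have h1 : ((1-t)^(-α) - 1)/α ≤ (-α)⁻¹ := by
      rw [div_le_iff_of_neg hneg]
      have he : (-α)⁻¹ * α = -1 := by rw [inv_neg, neg_mul, inv_mul_cancel₀ hneg.ne]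
      rw [he]
      linarith
    exact mul_le_mul_of_nonneg_left h1 (inv_nonneg.mpr h2pos.le)
  -- boundedness of the ratio implies 2^α (1-a)^α ≤ M for all a ∈ [0,1)
  have key : ∀ a ∈ Ico (0:ℝ) 1, (2:ℝ)^α * (1-a)^α ≤ M := by
    intro a ha
    have h1a : (0:ℝ) < 1 - a := by linarith [ha.2]
    have hrestrict : (volume : Measure ℝ).restrict (Ioc a 1) = volume.restrict (Ioo a 1) :=
      (Measure.restrict_congr_set Ioo_ae_eq_Ioc).symm
    have hcontw : ContinuousOn (wf α) (Ioo a 1) := by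
      apply ContinuousOn.mul continuousOn_const
      apply ContinuousOn.rpow_const (by fun_prop)
      intro x hx
      left
      have hx0 : 0 ≤ x := le_trans ha.1 hx.1.le
      have hx1 : x < 1 := hx.2
      have : 0 < 1 - x^2 := by nlinarith
      exact ne_of_gt this
    have hcontF : ContinuousOn (Ff α) (Ioo a 1) := fun t ht =>
      (F_contAt hα ⟨lt_of_le_of_lt ha.1 ht.1, ht.2⟩).continuousWithinAt
    have hcontg : ContinuousOn (fun t => wf α t * (1 + Ff α t)) (Ioo a 1) :=
      hcontw.mul (continuousOn_const.add hcontF)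
    have hgm : AEStronglyMeasurable (fun t => wf α t * (1 + Ff α t))
        (volume.restrict (uIoc a 1)) := by
      rw [uIoc_of_le ha.2.le, hrestrict]
      exact hcontg.aestronglyMeasurable measurableSet_Ioo
    have hgint : IntervalIntegrable (fun t => wf α t * (1 + Ff α t)) volume a 1 := by
      apply IntervalIntegrable.mono_fun' (g := fun t => (α+1) * (1 + CF) * (1-t)^α)
        ((ii_one_sub_rpow hα a 1).const_mul _) hgm
      rw [uIoc_of_le ha.2.le, hrestrict]
      filter_upwards [ae_restrict_mem measurableSet_Ioo] with t ht
      have htI : t ∈ Ico (0:ℝ) 1 := ⟨le_trans ha.1 ht.1.le, ht.2⟩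
      have hwn : 0 ≤ wf α t := w_nonneg α ⟨by linarith [htI.1], htI.2.le⟩ hα
      have hFn : 0 ≤ Ff α t := F_nonneg hα ⟨htI.1, htI.2.le⟩
      rw [Real.norm_eq_abs, abs_of_nonneg (by positivity)]
      have hwle := w_le hα ⟨htI.1, htI.2.le⟩
      rw [hmax] at hwle
      have hFle := hCF t htI
      have hrn : (0:ℝ) ≤ (1-t)^α := Real.rpow_nonneg (by linarith [htI.2]) _
      calc wf α t * (1 + Ff α t) ≤ ((α+1) * 1 * (1-t)^α) * (1 + CF) := by
            apply mul_le_mul hwle (by linarith) (by linarith) (by positivity)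
        _ = (α+1) * (1+CF) * (1-t)^α := by ring
    have hlow : ∀ t ∈ Icc a 1, (α+1) * (2:ℝ)^α * (1-t)^α ≤ wf α t * (1 + Ff α t) := by
      intro t ht
      have htI : t ∈ Icc (0:ℝ) 1 := ⟨le_trans ha.1 ht.1, ht.2⟩
      have h5 := w_ge hα htI
      rw [hmin] at h5
      have hFn := F_nonneg hα htI
      have hwn := w_nonneg α ⟨by linarith [htI.1], htI.2⟩ hα
      nlinarith [mul_nonneg hwn hFn]
    have hintlow : ∫ t in a..1, (α+1) * (2:ℝ)^α * (1-t)^α = 2^α * (1-a)^(α+1) := by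
      rw [intervalIntegral.integral_const_mul, int_one_sub_rpow hα ha.2.le]
      field_simp
    have hmono : (2:ℝ)^α * (1-a)^(α+1) ≤ ∫ t in a..1, wf α t * (1 + Ff α t) := by
      rw [← hintlow]
      exact intervalIntegral.integral_mono_on ha.2.le
        ((ii_one_sub_rpow hα a 1).const_mul _) hgint hlow
    have heval : (1/(1-a)) * ((2:ℝ)^α * (1-a)^(α+1)) = 2^α * (1-a)^α := by
      rw [Real.rpow_add h1a, Real.rpow_one]
      field_simp
    have := mul_le_mul_of_nonneg_left hmono (by positivity : (0:ℝ) ≤ 1/(1-a))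
    rw [heval] at this
    exact le_trans this (hM a ha)
  -- choose a making 2^α (1-a)^α large
  set K := max M 0 + 1 with hK
  have hKpos : (0:ℝ) < K := by positivity
  set δ := (K * (2:ℝ)^(-α))^(α⁻¹) with hδ
  have hbase : (0:ℝ) < K * (2:ℝ)^(-α) := mul_pos hKpos (Real.rpow_pos_of_pos two_pos _)
  have hδpos : 0 < δ := Real.rpow_pos_of_pos hbase _
  set ε := min (1/2 : ℝ) δ with hε
  have hεpos : 0 < ε := lt_min (by norm_num) hδpos
  have hεhalf : ε ≤ 1/2 := min_le_left _ _
  have haI : (1 - ε) ∈ Ico (0:ℝ) 1 := ⟨by linarith, by linarith⟩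
  have h1a : 1 - (1 - ε) = ε := by ring
  have hkey := key (1-ε) haI
  rw [h1a] at hkey
  have hδα : δ^α = K * (2:ℝ)^(-α) := Real.rpow_inv_rpow hbase.le hneg.ne
  have hεδ : ε ≤ δ := min_le_right _ _
  have hεα : δ^α ≤ ε^α := Real.rpow_le_rpow_of_nonpos hεpos hεδ hneg.le
  have h2 : (2:ℝ)^α * (2:ℝ)^(-α) = 1 := by
    rw [← Real.rpow_add two_pos]
    simp
  have hfinal : K ≤ (2:ℝ)^α * ε^α := by
    calc K = (2:ℝ)^α * (K * (2:ℝ)^(-α)) := by rw [show (2:ℝ)^α * (K * (2:ℝ)^(-α)) = K * ((2:ℝ)^α * (2:ℝ)^(-α)) by ring, h2, mul_one]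
      _ = (2:ℝ)^α * δ^α := by rw [hδα]
      _ ≤ (2:ℝ)^α * ε^α := mul_le_mul_of_nonneg_left hεα h2pos.le
  have : M ≤ max M 0 := le_max_left M 0
  rw [hK] at hfinal
  linarith

theorem stmt19 (α : ℝ) (hα : -1 < α) :
    (∃ M : ℝ, ∀ a ∈ Ico (0:ℝ) 1,
      (1 / (1 - a)) * ∫ t in a..1, ((α + 1) * (1 - t^2) ^ α) *
        (1 + ∫ s in (0:ℝ)..t, 1 / (∫ u in s..1, (α + 1) * (1 - u^2) ^ α)) ≤ M)
    ↔ 0 < α := by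
  have hshape : ∀ a : ℝ, (∫ t in a..1, ((α + 1) * (1 - t^2) ^ α) *
      (1 + ∫ s in (0:ℝ)..t, 1 / (∫ u in s..1, (α + 1) * (1 - u^2) ^ α)))
      = ∫ t in a..1, wf α t * (1 + Ff α t) := fun a => rfl
  constructor
  · rintro ⟨M, hM⟩
    by_contra hpos
    push_neg at hpos
    rcases lt_or_eq_of_le hpos with hneg | heq
    · exact case_neg hα hneg M (fun a ha => by rw [← hshape a]; exact hM a ha)
    · subst heq
      exact case_zero M (fun a ha => by rw [← hshape a]; exact hM a ha)
  · intro hpos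
    refine ⟨(α+1) * 2^α * (1 + 1/α), fun a ha => ?_⟩
    rw [hshape a]
    exact forward hpos ha
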